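/- arXiv:2403.03666 — 5 statements merged into one kernel-verified Lean document; each statement's English description precedes it below -/
import Mathlib

section
/- Fix real numbers λ₁, λ_N with 0 < λ₁ < λ_N, and let g₂(λ) = (e^{1−λ} − e^{1−λ_N})/(e^{1−λ₁} − e^{1−λ_N}) − 1 + λ/λ_N. Suppose there exists μ ∈ (λ₁, λ_N) with g₂(μ) < 0. Then g₂ has exactly one zero λ₀ in the open interval (λ₁, λ_N); moreover g₂(λ₁) = λ₁/λ_N > 0, g₂(λ_N) = 0, g₂(λ) > 0 for λ ∈ (λ₁, λ₀), and g₂(λ) < 0 for λ ∈ (λ₀, λ_N). -/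
open Real Set

/-- For `0 < λ₁ < λ_N` and
`g₂(λ) = (e^{1−λ} − e^{1−λ_N}) / (e^{1−λ₁} − e^{1−λ_N}) − 1 + λ/λ_N`,
if `g₂(μ) < 0` for some `μ ∈ (λ₁, λ_N)`, then `g₂(λ₁) = λ₁/λ_N > 0`, `g₂(λ_N) = 0`,
and `g₂` has exactly one zero `λ₀` in `(λ₁, λ_N)`, with `g₂ > 0` on `(λ₁, λ₀)` and
`g₂ < 0` on `(λ₀, λ_N)`. -/
theorem g2_unique_zero (l1 lN : ℝ) (h1 : 0 < l1) (h2 : l1 < lN)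
    (g2 : ℝ → ℝ)
    (hg2 : ∀ l, g2 l =
      (exp (1 - l) - exp (1 - lN)) / (exp (1 - l1) - exp (1 - lN)) - 1 + l / lN)
    (hneg : ∃ μ ∈ Ioo l1 lN, g2 μ < 0) :
    g2 l1 = l1 / lN ∧ 0 < g2 l1 ∧ g2 lN = 0 ∧
      ∃ l0 ∈ Ioo l1 lN, g2 l0 = 0 ∧
        (∀ l ∈ Ioo l1 lN, g2 l = 0 → l = l0) ∧
        (∀ l ∈ Ioo l1 l0, 0 < g2 l) ∧
        (∀ l ∈ Ioo l0 lN, g2 l < 0) := by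
  have hlN : (0:ℝ) < lN := h1.trans h2
  have hD : 0 < exp (1 - l1) - exp (1 - lN) := by
    have := exp_lt_exp.2 (show 1 - lN < 1 - l1 by linarith)
    linarith
  set D := exp (1 - l1) - exp (1 - lN) with hDdef
  have hD' : D ≠ 0 := ne_of_gt hD
  have hlN' : lN ≠ 0 := ne_of_gt hlN
  -- strict convexity inequality
  have conv : ∀ a b : ℝ, a < b → ∀ t s : ℝ, 0 < t → 0 < s → t + s = 1 →
      g2 (t * a + s * b) < t * g2 a + s * g2 b := by
    intro a b hab t s ht hs hts
    have hne : (1 - a) ≠ (1 - b) := by intro h; linarith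
    have hexp : exp (t • (1 - a) + s • (1 - b)) < t * exp (1 - a) + s * exp (1 - b) :=
      strictConvexOn_exp.2 (mem_univ _) (mem_univ _) hne ht hs hts
    have harg : t • (1 - a) + s • (1 - b) = 1 - (t * a + s * b) := by
      simp only [smul_eq_mul]; nlinarith
    rw [harg] at hexp
    rw [hg2, hg2, hg2]
    have expand : t * ((exp (1 - a) - exp (1 - lN)) / D - 1 + a / lN) +
        s * ((exp (1 - b) - exp (1 - lN)) / D - 1 + b / lN) =
        (t * exp (1 - a) + s * exp (1 - b) - exp (1 - lN)) / D - 1 + (t * a + s * b) / lN := by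
      linear_combination (-(exp (1 - lN) / D + 1)) * hts
    rw [expand]
    have key : (exp (1 - (t * a + s * b)) - exp (1 - lN)) / D <
        (t * exp (1 - a) + s * exp (1 - b) - exp (1 - lN)) / D :=
      (div_lt_div_iff_of_pos_right hD).mpr (by linarith)
    linarith
  -- convex combination form
  have combo : ∀ x a b : ℝ, a < x → x < b →
      g2 x < ((b - x) / (b - a)) * g2 a + ((x - a) / (b - a)) * g2 b := by
    intro x a b hax hxb
    have hba : (0:ℝ) < b - a := by linarith
    have hx : ((b - x) / (b - a)) * a + ((x - a) / (b - a)) * b = x := by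
      field_simp; ring
    have := conv a b (by linarith) ((b - x) / (b - a)) ((x - a) / (b - a))
      (div_pos (by linarith) hba) (div_pos (by linarith) hba)
      (by field_simp; ring)
    rwa [hx] at this
  have hgl1 : g2 l1 = l1 / lN := by
    rw [hg2, ← hDdef, div_self hD']; ring
  have hgl1pos : 0 < g2 l1 := by rw [hgl1]; positivity
  have hglN : g2 lN = 0 := by
    rw [hg2]; field_simp; ring
  refine ⟨hgl1, hgl1pos, hglN, ?_⟩
  obtain ⟨μ, hμ, hμneg⟩ := hneg
  have hcont : Continuous g2 := by
    have hfun : g2 = fun l =>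
        (exp (1 - l) - exp (1 - lN)) / D - 1 + l / lN := funext hg2
    rw [hfun]
    continuity
  have h0mem : (0:ℝ) ∈ Ioo (g2 μ) (g2 l1) := ⟨hμneg, hgl1pos⟩
  obtain ⟨l0, hl0mem, hl0⟩ :=
    intermediate_value_Ioo' (le_of_lt hμ.1) hcont.continuousOn h0mem
  have hl0' : l0 ∈ Ioo l1 lN := ⟨hl0mem.1, hl0mem.2.trans hμ.2⟩
  have pos : ∀ l ∈ Ioo l1 l0, 0 < g2 l := by
    intro l hl
    by_contra hcon
    push_neg at hcon
    have hc := combo l0 l lN hl.2 hl0'.2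
    rw [hglN] at hc
    have ht : (0:ℝ) < (lN - l0) / (lN - l) :=
      div_pos (by linarith [hl0'.2]) (by linarith [hl.2, hl0'.2])
    have : (lN - l0) / (lN - l) * g2 l ≤ 0 :=
      mul_nonpos_of_nonneg_of_nonpos ht.le hcon
    rw [hl0] at hc
    linarith
  have neg : ∀ l ∈ Ioo l0 lN, g2 l < 0 := by
    intro l hl
    have hc := combo l l0 lN hl.1 hl.2
    rw [hglN, hl0] at hc
    simpa using hc
  refine ⟨l0, hl0', hl0, ?_, pos, neg⟩
  intro l hl hz
  rcases lt_trichotomy l l0 with h | h | h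
  · exact absurd hz (ne_of_gt (pos l ⟨hl.1, h⟩))
  · exact h
  · exact absurd hz (ne_of_lt (neg l ⟨h, hl.2⟩))
end

section
/- Fix real numbers λ₁, λ_N with 0 < λ₁ < λ_N, and define g₀(λ) = h₁(λ)² − h₂(λ)² where h₁(λ) = (e^{1−λ} − e^{1−λ_N})/(e^{1−λ₁} − e^{1−λ_N}) and h₂(λ) = 1 − λ/λ_N. Suppose there exists μ ∈ (λ₁, λ_N) with h₁(μ) < h₂(μ), and let λ₀ ∈ (λ₁, λ_N) be the unique zero of h₁ − h₂ in (λ₁, λ_N). Then g₀(λ) ≥ 0 for all λ ∈ [λ₁, λ₀] and g₀(λ) ≤ 0 for all λ ∈ [λ₀, λ_N]. -/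
open Real Set

/-- For `0 < λ₁ < λ_N`, with the global low-pass filter
`h₁(λ) = (e^{1−λ} − e^{1−λ_N}) / (e^{1−λ₁} − e^{1−λ_N})`, the local low-pass filter
`h₂(λ) = 1 − λ/λ_N`, and `g₀ = h₁² − h₂²`: if `h₁(μ) < h₂(μ)` for some
`μ ∈ (λ₁, λ_N)` and `λ₀` is the unique zero of `h₁ − h₂` in `(λ₁, λ_N)`, then
`g₀ ≥ 0` on `[λ₁, λ₀]` and `g₀ ≤ 0` on `[λ₀, λ_N]`. -/
theorem g0_sign (l1 lN : ℝ) (h1pos : 0 < l1) (h2lt : l1 < lN)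
    (h₁ h₂ g₀ : ℝ → ℝ)
    (hh₁ : ∀ l, h₁ l = (exp (1 - l) - exp (1 - lN)) / (exp (1 - l1) - exp (1 - lN)))
    (hh₂ : ∀ l, h₂ l = 1 - l / lN)
    (hg₀ : ∀ l, g₀ l = (h₁ l) ^ 2 - (h₂ l) ^ 2)
    (hneg : ∃ μ ∈ Ioo l1 lN, h₁ μ < h₂ μ)
    (l0 : ℝ) (hl0mem : l0 ∈ Ioo l1 lN) (hl0zero : h₁ l0 - h₂ l0 = 0)
    (hl0uniq : ∀ l ∈ Ioo l1 lN, h₁ l - h₂ l = 0 → l = l0) :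
    (∀ l ∈ Icc l1 l0, 0 ≤ g₀ l) ∧ (∀ l ∈ Icc l0 lN, g₀ l ≤ 0) := by
  obtain ⟨hl0a, hl0b⟩ := hl0mem
  have lNpos : 0 < lN := lt_trans h1pos h2lt
  have Dpos : 0 < exp (1 - l1) - exp (1 - lN) := by
    have := exp_lt_exp.mpr (show 1 - lN < 1 - l1 by linarith)
    linarith
  set f : ℝ → ℝ := fun l => h₁ l - h₂ l with hf
  have hcont : Continuous f := by
    have : f = fun l => (exp (1 - l) - exp (1 - lN)) / (exp (1 - l1) - exp (1 - lN))
        - (1 - l / lN) := by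
      funext l; simp [hf, hh₁ l, hh₂ l]
    rw [this]
    exact (((continuous_const.sub continuous_id).rexp.sub continuous_const).div_const _).sub
      (continuous_const.sub (continuous_id.div_const _))
  -- h₁ nonneg and h₂ nonneg on (-∞, lN]
  have h1nn : ∀ l, l ≤ lN → 0 ≤ h₁ l := by
    intro l hl
    rw [hh₁ l]
    apply div_nonneg _ Dpos.le
    have := exp_le_exp.mpr (show 1 - lN ≤ 1 - l by linarith)
    linarith
  have h2nn : ∀ l, l ≤ lN → 0 ≤ h₂ l := by
    intro l hl
    rw [hh₂ l]
    have : l / lN ≤ 1 := (div_le_one lNpos).mpr hl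
    linarith
  -- f l1 > 0
  have hfl1 : 0 < f l1 := by
    have e1 : h₁ l1 = 1 := by rw [hh₁ l1]; field_simp
    have e2 : h₂ l1 < 1 := by
      rw [hh₂ l1]
      have : 0 < l1 / lN := div_pos h1pos lNpos
      linarith
    simp only [hf]; linarith
  -- f lN = 0
  have hflN : f lN = 0 := by
    have e1 : h₁ lN = 0 := by rw [hh₁ lN]; simp
    have e2 : h₂ lN = 0 := by rw [hh₂ lN]; field_simp; norm_num
    simp [hf, e1, e2]
  -- sign on [l1, l0]
  have signA : ∀ x ∈ Icc l1 l0, 0 ≤ f x := by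
    rintro x ⟨hx1, hx2⟩
    by_contra hneg'
    push_neg at hneg'
    have hx1' : l1 < x := lt_of_le_of_ne hx1 (by rintro rfl; linarith)
    have hx2' : x < l0 := lt_of_le_of_ne hx2 (by
      rintro rfl; rw [show f x = h₁ x - h₂ x from rfl, hl0zero] at hneg'; linarith)
    have : (0 : ℝ) ∈ f '' Ioo l1 x := by
      apply intermediate_value_Ioo' hx1'.le hcont.continuousOn
      exact ⟨hneg', hfl1⟩
    obtain ⟨c, hc, hfc⟩ := this
    have : c = l0 := hl0uniq c ⟨hc.1, by linarith [hc.2]⟩ hfc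
    linarith [hc.2]
  -- μ is to the right of l0
  obtain ⟨μ, hμmem, hμlt⟩ := hneg
  have hfμ : f μ < 0 := by simp only [hf]; linarith
  have hμgt : l0 < μ := by
    by_contra hle
    push_neg at hle
    have := signA μ ⟨hμmem.1.le, hle⟩
    linarith
  -- sign on [l0, lN]
  have signB : ∀ x ∈ Icc l0 lN, f x ≤ 0 := by
    rintro x ⟨hx1, hx2⟩
    by_contra hpos'
    push_neg at hpos'
    have hx1' : l0 < x := lt_of_le_of_ne hx1 (by
      rintro rfl; rw [show f l0 = h₁ l0 - h₂ l0 from rfl, hl0zero] at hpos'; linarith)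
    have hx2' : x < lN := lt_of_le_of_ne hx2 (by rintro rfl; rw [hflN] at hpos'; linarith)
    rcases lt_trichotomy x μ with h | h | h
    · have : (0 : ℝ) ∈ f '' Ioo x μ := by
        apply intermediate_value_Ioo' h.le hcont.continuousOn
        exact ⟨hfμ, hpos'⟩
      obtain ⟨c, hc, hfc⟩ := this
      have : c = l0 := hl0uniq c ⟨by linarith [hc.1], by linarith [hc.2, hμmem.2]⟩ hfc
      linarith [hc.1]
    · subst h; linarith
    · have : (0 : ℝ) ∈ f '' Ioo μ x := by
        apply intermediate_value_Ioo h.le hcont.continuousOn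
        exact ⟨hfμ, hpos'⟩
      obtain ⟨c, hc, hfc⟩ := this
      have : c = l0 := hl0uniq c ⟨by linarith [hc.1, hμmem.1], by linarith [hc.2]⟩ hfc
      linarith [hc.1]
  constructor
  · rintro l ⟨ha, hb⟩
    rw [hg₀ l]
    have hlN : l ≤ lN := by linarith
    have hsum : 0 ≤ h₁ l + h₂ l := add_nonneg (h1nn l hlN) (h2nn l hlN)
    have hd : 0 ≤ h₁ l - h₂ l := signA l ⟨ha, hb⟩
    nlinarith [mul_nonneg hsum hd]
  · rintro l ⟨ha, hb⟩
    rw [hg₀ l]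
    have hsum : 0 ≤ h₁ l + h₂ l := add_nonneg (h1nn l hb) (h2nn l hb)
    have hd : h₁ l - h₂ l ≤ 0 := signB l ⟨ha, hb⟩
    nlinarith [mul_nonpos_of_nonneg_of_nonpos hsum hd]
end

section
/- Fix real numbers λ₁, λ_N with 0 < λ₁ < λ_N, and define g₀(λ) = h₁(λ)² − h₂(λ)² with h₁(λ) = (e^{1−λ} − e^{1−λ_N})/(e^{1−λ₁} − e^{1−λ_N}) and h₂(λ) = 1 − λ/λ_N. Suppose h₁ − h₂ has a unique zero λ₀ in (λ₁, λ_N). Let μ_1 ≤ μ_2 ≤ ⋯ ≤ μ_N be real numbers in [λ₁, λ_N], and let m (1 ≤ m < N) be such that μ_t ≤ λ₀ for t ≤ m and μ_t > λ₀ for t > m, with μ_m < μ_{m+1}. Assume Σ_{t=1}^m g₀(μ_t) > 0 and Σ_{t=1}^N g₀(μ_t) ≤ 0. Then Σ_{t=1}^N μ_t · (h₁(μ_t)² − h₂(μ_t)²) < 0. -/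
open Real Set Finset

/-- (Deterministic core of Theorem 1, low-pass part.) For `0 < λ₁ < λ_N`,
global/local low-pass filters `h₁, h₂` with `g₀ = h₁² − h₂²`, suppose `h₁ − h₂` has a unique
zero `λ₀` in `(λ₁, λ_N)`. Let `μ_1 ≤ ⋯ ≤ μ_N` be reals in `[λ₁, λ_N]` and `1 ≤ m < N` with
`μ_t ≤ λ₀` for `t ≤ m`, `μ_t > λ₀` for `t > m`, and `μ_m < μ_{m+1}`. If
`∑_{t=1}^m g₀(μ_t) > 0` and `∑_{t=1}^N g₀(μ_t) ≤ 0`, then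
`∑_{t=1}^N μ_t (h₁(μ_t)² − h₂(μ_t)²) < 0`. -/
theorem lowpass_energy_lt (l1 lN : ℝ) (h1pos : 0 < l1) (h2lt : l1 < lN)
    (h₁ h₂ g₀ : ℝ → ℝ)
    (hh₁ : ∀ l, h₁ l = (exp (1 - l) - exp (1 - lN)) / (exp (1 - l1) - exp (1 - lN)))
    (hh₂ : ∀ l, h₂ l = 1 - l / lN)
    (hg₀ : ∀ l, g₀ l = (h₁ l) ^ 2 - (h₂ l) ^ 2)
    (l0 : ℝ) (hl0mem : l0 ∈ Ioo l1 lN) (hl0zero : h₁ l0 = h₂ l0)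
    (hl0uniq : ∀ l ∈ Ioo l1 lN, h₁ l = h₂ l → l = l0)
    (N m : ℕ) (hm1 : 1 ≤ m) (hmN : m < N)
    (μ : ℕ → ℝ)
    (hmem : ∀ t : ℕ, 1 ≤ t → t ≤ N → μ t ∈ Icc l1 lN)
    (hmono : ∀ s t : ℕ, 1 ≤ s → s ≤ t → t ≤ N → μ s ≤ μ t)
    (hle : ∀ t : ℕ, 1 ≤ t → t ≤ m → μ t ≤ l0)
    (hgt : ∀ t : ℕ, m < t → t ≤ N → l0 < μ t)
    (hgap : μ m < μ (m + 1))
    (hsumpos : 0 < ∑ t ∈ Finset.Icc 1 m, g₀ (μ t))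
    (hsum : ∑ t ∈ Finset.Icc 1 N, g₀ (μ t) ≤ 0) :
    ∑ t ∈ Finset.Icc 1 N, μ t * ((h₁ (μ t)) ^ 2 - (h₂ (μ t)) ^ 2) < 0 := by
  have hlN0 : 0 < lN := lt_trans h1pos h2lt
  have hD : 0 < exp (1 - l1) - exp (1 - lN) := by
    have : exp (1 - lN) < exp (1 - l1) := exp_lt_exp.mpr (by linarith)
    linarith
  obtain ⟨hl0l, hl0r⟩ := hl0mem
  -- f := h₁ - h₂ vanishes at lN and at l0
  have hfN : h₁ lN - h₂ lN = 0 := by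
    rw [hh₁, hh₂]
    field_simp; ring
  have hf0 : h₁ l0 - h₂ l0 = 0 := by rw [hl0zero]; ring
  -- convexity inequality for f = h₁ - h₂
  have key : ∀ x y a b : ℝ, 0 ≤ a → 0 ≤ b → a + b = 1 →
      h₁ (a * x + b * y) - h₂ (a * x + b * y)
        ≤ a * (h₁ x - h₂ x) + b * (h₁ y - h₂ y) := by
    intro x y a b ha hb hab
    have hexp := convexOn_exp.2 (Set.mem_univ (1 - x)) (Set.mem_univ (1 - y)) ha hb hab
    simp only [smul_eq_mul] at hexp
    have h1 : 1 - (a * x + b * y) = a * (1 - x) + b * (1 - y) := by nlinarith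
    rw [hh₁, hh₂, hh₁, hh₂, hh₁, hh₂, h1]
    have hnum : exp (a*(1-x)+b*(1-y)) - exp (1-lN)
        ≤ a*(exp (1-x) - exp (1-lN)) + b*(exp (1-y) - exp (1-lN)) := by
      have he : a*(exp (1-x) - exp (1-lN)) + b*(exp (1-y) - exp (1-lN))
          = a*exp (1-x) + b*exp (1-y) - exp (1-lN) := by
        linear_combination (-exp (1-lN)) * hab
      linarith [hexp]
    have hq : (exp (a*(1-x)+b*(1-y)) - exp (1-lN)) / (exp (1 - l1) - exp (1 - lN))
        ≤ (a*(exp (1-x) - exp (1-lN)) + b*(exp (1-y) - exp (1-lN))) / (exp (1 - l1) - exp (1 - lN)) :=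
      (div_le_div_iff_of_pos_right hD).mpr hnum
    have hlin : (1:ℝ) - (a*x+b*y)/lN = a*(1 - x/lN) + b*(1 - y/lN) := by
      linear_combination (-1 : ℝ) * hab
    have hsplit : a*((exp (1-x) - exp (1-lN))/(exp (1 - l1) - exp (1 - lN)) - (1-x/lN))
        + b*((exp (1-y) - exp (1-lN))/(exp (1 - l1) - exp (1 - lN)) - (1-y/lN))
        = (a*(exp (1-x) - exp (1-lN)) + b*(exp (1-y) - exp (1-lN)))/(exp (1 - l1) - exp (1 - lN))
          - (a*(1-x/lN)+b*(1-y/lN)) := by ring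
    rw [hsplit, ← hlin]
    linarith [hq]
  -- sign of f on [l1, l0] : f ≥ 0
  have factA : ∀ l : ℝ, l1 ≤ l → l ≤ l0 → h₂ l ≤ h₁ l := by
    intro l hl1 hl0'
    have hllN : l < lN := lt_of_le_of_lt hl0' hl0r
    set a : ℝ := (lN - l0) / (lN - l) with ha_def
    set b : ℝ := (l0 - l) / (lN - l) with hb_def
    have hd : 0 < lN - l := by linarith
    have ha : 0 < a := div_pos (by linarith) hd
    have hb : 0 ≤ b := div_nonneg (by linarith) hd.le
    have hab : a + b = 1 := by rw [ha_def, hb_def]; field_simp; ring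
    have hz : l0 = a * l + b * lN := by rw [ha_def, hb_def]; field_simp; ring
    have := key l lN a b ha.le hb hab
    rw [← hz, hfN, hf0] at this
    nlinarith
  -- sign of f on [l0, lN] : f ≤ 0
  have factB : ∀ l : ℝ, l0 ≤ l → l ≤ lN → h₁ l ≤ h₂ l := by
    intro l hl0' hllN
    set a : ℝ := (lN - l) / (lN - l0) with ha_def
    set b : ℝ := (l - l0) / (lN - l0) with hb_def
    have hd : 0 < lN - l0 := by linarith
    have ha : 0 ≤ a := div_nonneg (by linarith) hd.le
    have hb : 0 ≤ b := div_nonneg (by linarith) hd.le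
    have hab : a + b = 1 := by rw [ha_def, hb_def]; field_simp; ring
    have hz : l = a * l0 + b * lN := by rw [ha_def, hb_def]; field_simp; ring
    have := key l0 lN a b ha hb hab
    rw [← hz, hfN, hf0] at this
    nlinarith
  -- nonnegativity of h₁ and h₂ on [l1, lN]
  have hh₁nn : ∀ l : ℝ, l ≤ lN → 0 ≤ h₁ l := by
    intro l hl
    rw [hh₁]
    have : exp (1 - lN) ≤ exp (1 - l) := exp_le_exp.mpr (by linarith)
    exact div_nonneg (by linarith) hD.le
  have hh₂nn : ∀ l : ℝ, l ≤ lN → 0 ≤ h₂ l := by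
    intro l hl
    rw [hh₂]
    have : l / lN ≤ 1 := (div_le_one hlN0).mpr hl
    linarith
  -- μ (m+1) is positive
  have hmu1pos : 0 < μ (m + 1) :=
    lt_of_lt_of_le h1pos (hmem (m + 1) (by omega) (by omega)).1
  -- split the sum
  have hsplitN : (∑ t ∈ Finset.Ioc 0 m, μ t * g₀ (μ t)) + ∑ t ∈ Finset.Ioc m N, μ t * g₀ (μ t)
      = ∑ t ∈ Finset.Ioc 0 N, μ t * g₀ (μ t) :=
    Finset.sum_Ioc_consecutive _ (Nat.zero_le m) hmN.le
  have hsplitG : (∑ t ∈ Finset.Ioc 0 m, g₀ (μ t)) + ∑ t ∈ Finset.Ioc m N, g₀ (μ t)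
      = ∑ t ∈ Finset.Ioc 0 N, g₀ (μ t) :=
    Finset.sum_Ioc_consecutive _ (Nat.zero_le m) hmN.le
  have hIcc : ∀ k : ℕ, Finset.Icc 1 k = Finset.Ioc 0 k := by
    intro k; rw [← Finset.Icc_add_one_left_eq_Ioc]; rfl
  rw [hIcc] at hsumpos hsum
  -- pointwise bounds
  have hb1 : ∀ t ∈ Finset.Ioc 0 m, μ t * g₀ (μ t) ≤ μ m * g₀ (μ t) := by
    intro t ht
    rw [Finset.mem_Ioc] at ht
    have htmem := hmem t ht.1 (le_trans ht.2 hmN.le)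
    have hg : 0 ≤ g₀ (μ t) := by
      rw [hg₀]
      have hA := factA (μ t) htmem.1 (hle t ht.1 ht.2)
      have h1n := hh₁nn (μ t) htmem.2
      have h2n := hh₂nn (μ t) htmem.2
      nlinarith
    exact mul_le_mul_of_nonneg_right (hmono t m ht.1 ht.2 hmN.le) hg
  have hb2 : ∀ t ∈ Finset.Ioc m N, μ t * g₀ (μ t) ≤ μ (m + 1) * g₀ (μ t) := by
    intro t ht
    rw [Finset.mem_Ioc] at ht
    have htmem := hmem t (by omega) ht.2
    have hg : g₀ (μ t) ≤ 0 := by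
      rw [hg₀]
      have hB := factB (μ t) (hgt t ht.1 ht.2).le htmem.2
      have h1n := hh₁nn (μ t) htmem.2
      have h2n := hh₂nn (μ t) htmem.2
      nlinarith
    exact mul_le_mul_of_nonpos_right (hmono (m + 1) t (by omega) (by omega) ht.2) hg
  have hT1 : ∑ t ∈ Finset.Ioc 0 m, μ t * g₀ (μ t)
      ≤ μ m * ∑ t ∈ Finset.Ioc 0 m, g₀ (μ t) := by
    rw [Finset.mul_sum]
    exact Finset.sum_le_sum hb1
  have hT2 : ∑ t ∈ Finset.Ioc m N, μ t * g₀ (μ t)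
      ≤ μ (m + 1) * ∑ t ∈ Finset.Ioc m N, g₀ (μ t) := by
    rw [Finset.mul_sum]
    exact Finset.sum_le_sum hb2
  -- conclude
  have hgoal : ∑ t ∈ Finset.Icc 1 N, μ t * ((h₁ (μ t)) ^ 2 - (h₂ (μ t)) ^ 2)
      = ∑ t ∈ Finset.Ioc 0 N, μ t * g₀ (μ t) := by
    rw [hIcc]
    refine Finset.sum_congr rfl fun t _ => ?_
    rw [hg₀]
  rw [hgoal, ← hsplitN]
  set S1 := ∑ t ∈ Finset.Ioc 0 m, g₀ (μ t) with hS1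
  set S2 := ∑ t ∈ Finset.Ioc m N, g₀ (μ t) with hS2
  have hS12 : S1 + S2 ≤ 0 := by rw [hsplitG]; exact hsum
  have h2' : μ (m + 1) * S2 ≤ μ (m + 1) * (-S1) :=
    mul_le_mul_of_nonneg_left (by linarith) hmu1pos.le
  nlinarith [mul_lt_mul_of_pos_right hgap hsumpos]
end

section
/- Fix real numbers λ₁, λ_N with 0 ≤ λ₁ < λ_N, and let h₃(λ) = (e^{λ} − e^{λ₁})/(e^{λ_N} − e^{λ₁}) and h₄(λ) = λ/λ_N. For any real numbers μ_1, …, μ_N ∈ [λ₁, λ_N], one has Σ_{t=1}^N μ_t · (h₃(μ_t)² − h₄(μ_t)²) ≤ 0; moreover the inequality is strict if there exists some t with μ_t ∈ (λ₁, λ_N) and μ_t > 0. -/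
open Real Set Finset

lemma highpass_strict (l1 lN : ℝ) (h1 : 0 ≤ l1) (h2 : l1 < lN)
    (μ : ℝ) (hμ1 : l1 < μ) (hμ2 : μ < lN) :
    (exp μ - exp l1) / (exp lN - exp l1) < μ / lN := by
  have hD : (0:ℝ) < exp lN - exp l1 := by
    have := exp_lt_exp.mpr h2; linarith
  have hlN : (0:ℝ) < lN := lt_of_le_of_lt h1 h2
  set b := (μ - l1) / (lN - l1) with hb
  have hden : (0:ℝ) < lN - l1 := by linarith
  have hb0 : 0 < b := div_pos (by linarith) hden
  have hb1 : b < 1 := (div_lt_one hden).mpr (by linarith)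
  have ha0 : 0 < 1 - b := by linarith
  have hcomb : (1 - b) * l1 + b * lN = μ := by
    field_simp [hb]
    have : b * (lN - l1) = μ - l1 := by rw [hb]; exact div_mul_cancel₀ _ hden.ne'
    linarith
  have hconv := strictConvexOn_exp.2 (Set.mem_univ l1) (Set.mem_univ lN)
    (ne_of_lt h2) ha0 hb0 (by ring)
  simp only [smul_eq_mul, hcomb] at hconv
  -- exp μ < (1-b)*exp l1 + b*exp lN
  have key : (exp μ - exp l1) / (exp lN - exp l1) < b := by
    rw [div_lt_iff₀ hD]
    nlinarith [hconv]
  have hble : b ≤ μ / lN := by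
    rw [hb, div_le_div_iff₀ hden hlN]
    nlinarith
  linarith

lemma highpass_le (l1 lN : ℝ) (h1 : 0 ≤ l1) (h2 : l1 < lN)
    (μ : ℝ) (hμ1 : l1 ≤ μ) (hμ2 : μ ≤ lN) :
    (exp μ - exp l1) / (exp lN - exp l1) ≤ μ / lN := by
  have hD : (0:ℝ) < exp lN - exp l1 := by
    have := exp_lt_exp.mpr h2; linarith
  have hlN : (0:ℝ) < lN := lt_of_le_of_lt h1 h2
  rcases eq_or_lt_of_le hμ1 with h | h
  · rw [← h]
    simp only [sub_self, zero_div]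
    positivity
  rcases eq_or_lt_of_le hμ2 with h' | h'
  · rw [h', div_self (ne_of_gt hD), div_self (ne_of_gt hlN)]
  exact le_of_lt (highpass_strict l1 lN h1 h2 μ h h')

/-- (Deterministic core of Theorem 1, high-pass part.) For `0 ≤ λ₁ < λ_N`,
with `h₃(λ) = (e^λ − e^{λ₁}) / (e^{λ_N} − e^{λ₁})` and `h₄(λ) = λ/λ_N`, for any reals
`μ_1, …, μ_N ∈ [λ₁, λ_N]` we have `∑_t μ_t (h₃(μ_t)² − h₄(μ_t)²) ≤ 0`, strictly if some
`μ_t ∈ (λ₁, λ_N)` with `μ_t > 0`. -/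
theorem highpass_energy_le (l1 lN : ℝ) (h1 : 0 ≤ l1) (h2 : l1 < lN)
    (h₃ h₄ : ℝ → ℝ)
    (hh₃ : ∀ l, h₃ l = (exp l - exp l1) / (exp lN - exp l1))
    (hh₄ : ∀ l, h₄ l = l / lN)
    (N : ℕ) (μ : Fin N → ℝ) (hmem : ∀ t, μ t ∈ Icc l1 lN) :
    ∑ t : Fin N, μ t * ((h₃ (μ t)) ^ 2 - (h₄ (μ t)) ^ 2) ≤ 0 ∧
      ((∃ t : Fin N, μ t ∈ Ioo l1 lN ∧ 0 < μ t) →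
        ∑ t : Fin N, μ t * ((h₃ (μ t)) ^ 2 - (h₄ (μ t)) ^ 2) < 0) := by
  have hD : (0:ℝ) < exp lN - exp l1 := by
    have := exp_lt_exp.mpr h2; linarith
  have hμ0 : ∀ t, 0 ≤ μ t := fun t => le_trans h1 (hmem t).1
  have h₃0 : ∀ t, 0 ≤ h₃ (μ t) := by
    intro t
    rw [hh₃]
    have := exp_le_exp.mpr (hmem t).1
    exact div_nonneg (by linarith) hD.le
  have hle : ∀ t, h₃ (μ t) ≤ h₄ (μ t) := by
    intro t
    rw [hh₃, hh₄]
    exact highpass_le l1 lN h1 h2 (μ t) (hmem t).1 (hmem t).2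
  have hterm : ∀ t : Fin N, μ t * ((h₃ (μ t)) ^ 2 - (h₄ (μ t)) ^ 2) ≤ 0 := by
    intro t
    have hsq : (h₃ (μ t)) ^ 2 ≤ (h₄ (μ t)) ^ 2 :=
      pow_le_pow_left₀ (h₃0 t) (hle t) 2
    exact mul_nonpos_of_nonneg_of_nonpos (hμ0 t) (by linarith)
  refine ⟨Finset.sum_nonpos (fun t _ => hterm t), ?_⟩
  rintro ⟨t, ⟨ht1, ht2⟩, htpos⟩
  have hstrict : h₃ (μ t) < h₄ (μ t) := by
    rw [hh₃, hh₄]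
    exact highpass_strict l1 lN h1 h2 (μ t) ht1 ht2
  have hsq : (h₃ (μ t)) ^ 2 < (h₄ (μ t)) ^ 2 :=
    pow_lt_pow_left₀ hstrict (h₃0 t) (by norm_num)
  have hterm' : μ t * ((h₃ (μ t)) ^ 2 - (h₄ (μ t)) ^ 2) < 0 :=
    mul_neg_of_pos_of_neg htpos (by linarith)
  calc ∑ s : Fin N, μ s * ((h₃ (μ s)) ^ 2 - (h₄ (μ s)) ^ 2)
      < ∑ s : Fin N, (0:ℝ) := by
        apply Finset.sum_lt_sum (fun s _ => hterm s) ⟨t, Finset.mem_univ t, hterm'⟩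
    _ = 0 := by simp
end

section
/- In the setting of the previous statement, let (Ω, 𝔽, ℙ) be a probability space and a_1, …, a_N : Ω → ℝ be random variables such that each a_t² is integrable and E[a_t²] = σ² for a common constant σ² > 0. If some μ_t satisfies μ_t ∈ (λ₁, λ_N) and μ_t > 0, then E[ Σ_{t=1}^N a_t² · μ_t · (h₃(μ_t)² − h₄(μ_t)²) ] < 0. -/
open Real Set Finset MeasureTheory

lemma h3_le_h4_aux (l1 lN : ℝ) (h1 : 0 ≤ l1) (h2 : l1 < lN) (μ : ℝ) (hμ : μ ∈ Icc l1 lN) :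
    (exp μ - exp l1) / (exp lN - exp l1) ≤ μ / lN := by
  have hE : 0 < exp lN - exp l1 := sub_pos.2 (exp_lt_exp.2 h2)
  have hd : 0 < lN - l1 := sub_pos.2 h2
  have hlN : 0 < lN := h1.trans_lt h2
  set t : ℝ := (μ - l1) / (lN - l1) with ht
  have ht0 : 0 ≤ t := div_nonneg (sub_nonneg.2 hμ.1) hd.le
  have hcomb : (1 - t) * l1 + t * lN = μ := by
    have h' : t * (lN - l1) = μ - l1 := by rw [ht]; exact div_mul_cancel₀ _ hd.ne'
    linear_combination h'
  have hconv := convexOn_exp.2 (mem_univ l1) (mem_univ lN)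
    (by
      have : t ≤ 1 := (div_le_one hd).2 (sub_le_sub_right hμ.2 _)
      linarith : (0:ℝ) ≤ 1 - t) ht0 (by ring)
  simp only [smul_eq_mul, hcomb] at hconv
  have h1' : (exp μ - exp l1) / (exp lN - exp l1) ≤ t := by
    rw [div_le_iff₀ hE]; nlinarith
  have h2' : t ≤ μ / lN := by
    rw [ht, div_le_div_iff₀ hd hlN]
    nlinarith [hμ.2, h1]
  linarith

lemma h3_lt_h4_aux (l1 lN : ℝ) (h1 : 0 ≤ l1) (h2 : l1 < lN) (μ : ℝ) (hμ : μ ∈ Ioo l1 lN) :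
    (exp μ - exp l1) / (exp lN - exp l1) < μ / lN := by
  have hE : 0 < exp lN - exp l1 := sub_pos.2 (exp_lt_exp.2 h2)
  have hd : 0 < lN - l1 := sub_pos.2 h2
  have hlN : 0 < lN := h1.trans_lt h2
  set t : ℝ := (μ - l1) / (lN - l1) with ht
  have ht0 : 0 < t := div_pos (sub_pos.2 hμ.1) hd
  have hcomb : (1 - t) * l1 + t * lN = μ := by
    have h' : t * (lN - l1) = μ - l1 := by rw [ht]; exact div_mul_cancel₀ _ hd.ne'
    linear_combination h'
  have hconv := strictConvexOn_exp.2 (mem_univ l1) (mem_univ lN) h2.ne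
    (by
      have : t < 1 := (div_lt_one hd).2 (by linarith [hμ.2])
      linarith : (0:ℝ) < 1 - t) ht0 (by ring)
  simp only [smul_eq_mul, hcomb] at hconv
  have h1' : (exp μ - exp l1) / (exp lN - exp l1) < t := by
    rw [div_lt_iff₀ hE]; nlinarith
  have h2' : t ≤ μ / lN := by
    rw [ht, div_le_div_iff₀ hd hlN]
    nlinarith [hμ.2.le, h1]
  linarith

lemma h3_nonneg_aux (l1 lN : ℝ) (h2 : l1 < lN) (μ : ℝ) (hμ : l1 ≤ μ) :
    0 ≤ (exp μ - exp l1) / (exp lN - exp l1) :=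
  div_nonneg (sub_nonneg.2 (exp_le_exp.2 hμ)) (sub_nonneg.2 (exp_le_exp.2 h2.le))

/-- (Probabilistic form of Theorem 1, high-pass part.) In the setting of
Statement 13, if `a_1, …, a_N` are random variables on a probability space with each `a_t²`
integrable and of common mean `E[a_t²] = σ² > 0`, and some `μ_t ∈ (λ₁, λ_N)` with
`μ_t > 0`, then `E[∑_t a_t² μ_t (h₃(μ_t)² − h₄(μ_t)²)] < 0`. -/
theorem expected_highpass_energy_lt (l1 lN : ℝ) (h1 : 0 ≤ l1) (h2 : l1 < lN)
    (h₃ h₄ : ℝ → ℝ)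
    (hh₃ : ∀ l, h₃ l = (exp l - exp l1) / (exp lN - exp l1))
    (hh₄ : ∀ l, h₄ l = l / lN)
    (N : ℕ) (μ : Fin N → ℝ) (hmem : ∀ t, μ t ∈ Icc l1 lN)
    (Ω : Type*) [MeasureSpace Ω] [IsProbabilityMeasure (volume : Measure Ω)]
    (a : Fin N → Ω → ℝ) (σ2 : ℝ) (hσ2 : 0 < σ2)
    (hint : ∀ t : Fin N, Integrable (fun ω => (a t ω) ^ 2))
    (hvar : ∀ t : Fin N, ∫ ω, (a t ω) ^ 2 = σ2)
    (hstrict : ∃ t : Fin N, μ t ∈ Ioo l1 lN ∧ 0 < μ t) :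
    ∫ ω, ∑ t : Fin N,
        (a t ω) ^ 2 * (μ t * ((h₃ (μ t)) ^ 2 - (h₄ (μ t)) ^ 2)) < 0 := by
  set c : Fin N → ℝ := fun t => μ t * ((h₃ (μ t)) ^ 2 - (h₄ (μ t)) ^ 2) with hc
  have hlN : 0 < lN := h1.trans_lt h2
  -- pointwise bounds on c
  have hcle : ∀ t, c t ≤ 0 := by
    intro t
    have hh3le := h3_le_h4_aux l1 lN h1 h2 (μ t) (hmem t)
    have hh3nn := h3_nonneg_aux l1 lN h2 (μ t) (hmem t).1
    have hsq : (h₃ (μ t)) ^ 2 ≤ (h₄ (μ t)) ^ 2 := by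
      rw [hh₃, hh₄]; exact pow_le_pow_left₀ hh3nn hh3le 2
    have hμnn : 0 ≤ μ t := h1.trans (hmem t).1
    exact mul_nonpos_of_nonneg_of_nonpos hμnn (by linarith)
  obtain ⟨t0, ht0mem, ht0pos⟩ := hstrict
  have hclt : c t0 < 0 := by
    have hh3lt := h3_lt_h4_aux l1 lN h1 h2 (μ t0) ht0mem
    have hh3nn := h3_nonneg_aux l1 lN h2 (μ t0) ht0mem.1.le
    have hsq : (h₃ (μ t0)) ^ 2 < (h₄ (μ t0)) ^ 2 := by
      rw [hh₃, hh₄]; exact pow_lt_pow_left₀ hh3lt hh3nn (by norm_num)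
    exact mul_neg_of_pos_of_neg ht0pos (by linarith)
  -- compute the integral
  have hint' : ∀ t ∈ Finset.univ, Integrable (fun ω => (a t ω) ^ 2 * c t) :=
    fun t _ => (hint t).mul_const (c t)
  have hval : ∫ ω, ∑ t : Fin N, (a t ω) ^ 2 * c t = ∑ t : Fin N, σ2 * c t := by
    rw [integral_finset_sum _ hint']
    refine Finset.sum_congr rfl fun t _ => ?_
    rw [integral_mul_const, hvar t]
  have hsum : ∑ t : Fin N, σ2 * c t < 0 := by
    have : ∑ t : Fin N, σ2 * c t < ∑ _t : Fin N, (0:ℝ) := by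
      refine Finset.sum_lt_sum (fun i _ => mul_nonpos_of_nonneg_of_nonpos hσ2.le (hcle i))
        ⟨t0, Finset.mem_univ _, mul_neg_of_pos_of_neg hσ2 hclt⟩
    simpa using this
  calc ∫ ω, ∑ t : Fin N, (a t ω) ^ 2 * c t = ∑ t : Fin N, σ2 * c t := hval
    _ < 0 := hsum
end
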